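/- arXiv:2204.06106 — 4 statements merged into one kernel-verified Lean document; each statement's English description precedes it below -/
import Mathlib

section
/- Let d ≥ 1, σ > 0, a > 0, and u₁, u₂ ∈ ℝ^d. Then TV_a(N(u₁, σ²I_d), N(u₂, σ²I_d)) = TV_a(N(0, σ²), N(‖u₁ − u₂‖₂, σ²)); that is, the TV_a divergence between two isotropic Gaussians in ℝ^d with common standard deviation σ depends only on σ and the Euclidean distance between the means, and equals the TV_a divergence of the corresponding one-dimensional Gaussians. -/
open MeasureTheory

/-- `TV_a(X, Y) = (1/2) ∫ |f(x) − a·g(x)| dx` for densities `f, g`. -/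
noncomputable def TVa {E : Type*} [MeasureSpace E] (a : ℝ) (f g : E → ℝ) : ℝ :=
  (1 / 2) * ∫ x, |f x - a * g x|

/-- Density of the isotropic Gaussian `N(u, σ²I_d)` on `ℝ^d`. -/
noncomputable def gaussDensity (d : ℕ) (σ : ℝ) (u : EuclideanSpace ℝ (Fin d))
    (x : EuclideanSpace ℝ (Fin d)) : ℝ :=
  (2 * Real.pi * σ ^ 2) ^ (-(d : ℝ) / 2) * Real.exp (-‖x - u‖ ^ 2 / (2 * σ ^ 2))

/-- Density of the one-dimensional Gaussian `N(u, σ²)` on `ℝ`. -/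
noncomputable def gauss1 (σ u : ℝ) (x : ℝ) : ℝ :=
  (2 * Real.pi * σ ^ 2) ^ (-(1 : ℝ) / 2) * Real.exp (-(x - u) ^ 2 / (2 * σ ^ 2))

lemma euclid_norm_sq {m : ℕ} (z : EuclideanSpace ℝ (Fin m)) : ‖z‖ ^ 2 = ∑ i, z i ^ 2 := by
  rw [EuclideanSpace.norm_eq, Real.sq_sqrt (by positivity)]
  simp [sq_abs]

lemma pow_split (n : ℕ) (σ : ℝ) (hσ : 0 < σ) :
    (2 * Real.pi * σ ^ 2) ^ (-((n+1 : ℕ) : ℝ) / 2)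
      = (2 * Real.pi * σ ^ 2) ^ (-(1:ℝ) / 2) * ((2 * Real.pi * σ ^ 2) ^ (-(1:ℝ) / 2)) ^ n := by
  have h2 : (0:ℝ) < 2 * Real.pi * σ ^ 2 := by positivity
  rw [← Real.rpow_natCast ((2 * Real.pi * σ ^ 2) ^ (-(1:ℝ)/2)) n, ← Real.rpow_mul h2.le,
    ← Real.rpow_add h2]
  congr 1; push_cast; ring

lemma integral_gauss1 (σ : ℝ) (hσ : 0 < σ) : ∫ x : ℝ, gauss1 σ 0 x = 1 := by
  have h2 : (0:ℝ) < 2 * Real.pi * σ ^ 2 := by positivity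
  simp only [gauss1, sub_zero]
  rw [integral_const_mul]
  have h3 : ∀ x : ℝ, -x ^ 2 / (2 * σ ^ 2) = -(1 / (2 * σ ^2)) * x ^ 2 := fun x => by
    field_simp
  simp_rw [h3]
  rw [integral_gaussian]
  have h4 : Real.pi / (1 / (2 * σ ^ 2)) = 2 * Real.pi * σ ^ 2 := by field_simp
  rw [h4, Real.sqrt_eq_rpow, ← Real.rpow_add h2]
  norm_num

lemma key_reduction (n : ℕ) (σ a r : ℝ) (hσ : 0 < σ) :
    ∫ x : EuclideanSpace ℝ (Fin (n+1)),
      |gaussDensity (n+1) σ 0 x - a * gaussDensity (n+1) σ (r • EuclideanSpace.single 0 1) x|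
    = ∫ t : ℝ, |gauss1 σ 0 t - a * gauss1 σ r t| := by
  set w : EuclideanSpace ℝ (Fin (n+1)) := r • EuclideanSpace.single 0 1 with hw
  set C1 : ℝ := (2 * Real.pi * σ ^ 2) ^ (-(1:ℝ) / 2) with hC1
  rw [← ((EuclideanSpace.volume_preserving_symm_measurableEquiv_toLp (Fin (n+1))).symm).integral_comp
      (MeasurableEquiv.measurableEmbedding _) _]
  rw [← ((volume_preserving_piFinSuccAbove (fun _ : Fin (n+1) => ℝ) 0).symm).integral_comp
      (MeasurableEquiv.measurableEmbedding _) _]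
  have hpt : ∀ z : ℝ × (Fin n → ℝ),
      |gaussDensity (n+1) σ 0
          ((MeasurableEquiv.toLp 2 (Fin (n+1) → ℝ)).symm.symm
            ((MeasurableEquiv.piFinSuccAbove (fun _ : Fin (n+1) => ℝ) 0).symm z))
        - a * gaussDensity (n+1) σ w
          ((MeasurableEquiv.toLp 2 (Fin (n+1) → ℝ)).symm.symm
            ((MeasurableEquiv.piFinSuccAbove (fun _ : Fin (n+1) => ℝ) 0).symm z))|
      = |gauss1 σ 0 z.1 - a * gauss1 σ r z.1| * ∏ j, gauss1 σ 0 (z.2 j) := by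
    rintro ⟨t, y⟩
    set x : EuclideanSpace ℝ (Fin (n+1)) :=
      (MeasurableEquiv.toLp 2 (Fin (n+1) → ℝ)).symm.symm
        ((MeasurableEquiv.piFinSuccAbove (fun _ : Fin (n+1) => ℝ) 0).symm (t, y)) with hx
    have hxi : ∀ i, x i = Fin.insertNth (α := fun _ : Fin (n+1) => ℝ) 0 t y i := fun i => rfl
    have hx0 : x 0 = t := by rw [hxi]; simp
    have hxs : ∀ j : Fin n, x j.succ = y j := by
      intro j
      rw [hxi, ← Fin.zero_succAbove j, Fin.insertNth_apply_succAbove]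
    have hw0 : w 0 = r := by simp [hw, EuclideanSpace.single_apply]
    have hws : ∀ j : Fin n, w j.succ = 0 := by
      intro j; simp [hw, EuclideanSpace.single_apply, Fin.succ_ne_zero]
    have hn1 : ‖x - (0 : EuclideanSpace ℝ (Fin (n+1)))‖ ^ 2 = t ^ 2 + ∑ j, y j ^ 2 := by
      rw [sub_zero, euclid_norm_sq, Fin.sum_univ_succ, hx0]
      simp_rw [hxs]
    have hn2 : ‖x - w‖ ^ 2 = (t - r) ^ 2 + ∑ j, y j ^ 2 := by
      rw [euclid_norm_sq, Fin.sum_univ_succ]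
      simp only [PiLp.sub_apply, hx0, hw0]
      congr 1
      refine Finset.sum_congr rfl fun j _ => ?_
      rw [hxs, hws, sub_zero]
    have hprod : (∏ j, gauss1 σ 0 (y j))
        = C1 ^ n * Real.exp (-(∑ j, y j ^ 2) / (2 * σ ^ 2)) := by
      simp only [gauss1, sub_zero, ← hC1]
      rw [Finset.prod_mul_distrib, Finset.prod_const, Finset.card_univ, Fintype.card_fin,
        ← Real.exp_sum]
      congr 1
      rw [← Finset.sum_div, ← Finset.sum_neg_distrib]
    simp only [gaussDensity, hn1, hn2, pow_split n σ hσ, ← hC1]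
    rw [hprod]
    have e1 : ∀ s S : ℝ, Real.exp (-(s + S) / (2 * σ ^ 2))
        = Real.exp (-s / (2 * σ ^ 2)) * Real.exp (-S / (2 * σ ^ 2)) := by
      intro s S; rw [← Real.exp_add]; congr 1; ring
    rw [e1, e1]
    have hfac : C1 * C1 ^ n
          * (Real.exp (-t ^ 2 / (2 * σ ^ 2)) * Real.exp (-(∑ j, y j ^ 2) / (2 * σ ^ 2)))
          - a * (C1 * C1 ^ n * (Real.exp (-(t - r) ^ 2 / (2 * σ ^ 2))
            * Real.exp (-(∑ j, y j ^ 2) / (2 * σ ^ 2))))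
        = (gauss1 σ 0 t - a * gauss1 σ r t)
            * (C1 ^ n * Real.exp (-(∑ j, y j ^ 2) / (2 * σ ^ 2))) := by
      simp only [gauss1, sub_zero, ← hC1]; ring
    rw [hfac, abs_mul]
    congr 1
    have hC1pos : 0 < C1 := by rw [hC1]; positivity
    rw [abs_of_nonneg (by positivity)]
  simp_rw [hpt]
  rw [MeasureTheory.Measure.volume_eq_prod,
    MeasureTheory.integral_prod_mul (f := fun t => |gauss1 σ 0 t - a * gauss1 σ r t|)
      (g := fun y : Fin n → ℝ => ∏ j, gauss1 σ 0 (y j))]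
  rw [MeasureTheory.volume_pi, integral_fintype_prod_eq_pow (gauss1 σ 0), integral_gauss1 σ hσ, one_pow, mul_one]

lemma move_means (n : ℕ) (σ a : ℝ) (u₁ u₂ : EuclideanSpace ℝ (Fin (n+1))) :
    (∫ x : EuclideanSpace ℝ (Fin (n+1)),
        |gaussDensity (n+1) σ u₁ x - a * gaussDensity (n+1) σ u₂ x|)
      = ∫ x : EuclideanSpace ℝ (Fin (n+1)),
        |gaussDensity (n+1) σ 0 x
          - a * gaussDensity (n+1) σ (‖u₁ - u₂‖ • EuclideanSpace.single 0 1) x| := by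
  set w : EuclideanSpace ℝ (Fin (n+1)) := ‖u₁ - u₂‖ • EuclideanSpace.single 0 1 with hw
  have hwnorm : ‖w‖ = ‖u₂ - u₁‖ := by
    rw [hw, norm_smul, EuclideanSpace.norm_single, norm_one, mul_one, norm_norm, norm_sub_rev]
  set L : EuclideanSpace ℝ (Fin (n+1)) ≃ₗᵢ[ℝ] EuclideanSpace ℝ (Fin (n+1)) :=
    Submodule.reflection (ℝ ∙ (w - (u₂ - u₁)))ᗮ with hL
  have hLw : L w = u₂ - u₁ := Submodule.reflection_sub hwnorm
  rw [← integral_add_right_eq_self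
    (fun x => |gaussDensity (n+1) σ u₁ x - a * gaussDensity (n+1) σ u₂ x|) u₁]
  rw [← (L.measurePreserving).integral_comp
      (L.toHomeomorph.isClosedEmbedding.measurableEmbedding)
      (fun x => |gaussDensity (n+1) σ u₁ (x + u₁) - a * gaussDensity (n+1) σ u₂ (x + u₁)|)]
  congr 1
  funext x
  have e1 : L x + u₁ - u₁ = L x := add_sub_cancel_right _ _
  have e2 : L x + u₁ - u₂ = L x - L w := by rw [hLw]; abel
  simp only [gaussDensity, e1, e2, ← L.map_sub, L.norm_map, sub_zero]

/-- The `TV_a` divergence between two isotropic Gaussians in `ℝ^d` with common standard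
deviation `σ` depends only on `σ` and the Euclidean distance between the means, and equals
the `TV_a` divergence of the corresponding one-dimensional Gaussians. -/
theorem tva_gauss_eq_one_dim (d : ℕ) (hd : 1 ≤ d) (σ a : ℝ) (hσ : 0 < σ) (ha : 0 < a)
    (u₁ u₂ : EuclideanSpace ℝ (Fin d)) :
    TVa a (gaussDensity d σ u₁) (gaussDensity d σ u₂)
      = TVa a (gauss1 σ 0) (gauss1 σ ‖u₁ - u₂‖) := by
  obtain ⟨n, rfl⟩ : ∃ n, d = n + 1 := ⟨d - 1, (Nat.succ_pred_eq_of_pos hd).symm⟩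
  unfold TVa
  congr 1
  rw [move_means n σ a u₁ u₂, key_reduction n σ a ‖u₁ - u₂‖ hσ]
end

section
/- Let q ∈ (0, 1], let a ∈ ℝ, and let X and Y be probability measures on ℝ^n with densities f and g with respect to Lebesgue measure. Let X′ be the mixture (1 − q)·Y + q·X, i.e., the probability measure with density (1 − q)g + qf. Then TV_a(X′, Y) = q · TV_{(a + q − 1)/q}(X, Y). -/
open MeasureTheory

/-- If `X′` is the mixture `(1 − q)·Y + q·X` (with density `(1 − q)g + qf`), then
`TV_a(X′, Y) = q · TV_{(a + q − 1)/q}(X, Y)`. -/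
theorem tva_mixture (n : ℕ) (q a : ℝ) (hq : q ∈ Set.Ioc (0 : ℝ) 1)
    (f g : EuclideanSpace ℝ (Fin n) → ℝ)
    (hf0 : ∀ x, 0 ≤ f x) (hg0 : ∀ x, 0 ≤ g x)
    (hfi : Integrable f) (hgi : Integrable g)
    (hf1 : ∫ x, f x = 1) (hg1 : ∫ x, g x = 1) :
    TVa a (fun x => (1 - q) * g x + q * f x) g = q * TVa ((a + q - 1) / q) f g := by
  obtain ⟨hq0, hq1⟩ := hq
  have hqne : q ≠ 0 := ne_of_gt hq0
  unfold TVa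
  have key : ∀ x, |(1 - q) * g x + q * f x - a * g x|
      = q * |f x - (a + q - 1) / q * g x| := by
    intro x
    have h : (1 - q) * g x + q * f x - a * g x
        = q * (f x - (a + q - 1) / q * g x) := by
      field_simp; ring
    rw [h, abs_mul, abs_of_pos hq0]
  simp_rw [key, integral_const_mul]
  ring
end

section
/- Let X and Y be probability measures on ℝ^m × ℝ^n with densities f(s, t) = f₁(s)·f₂(s, t) and g(s, t) = g₁(s)·g₂(s, t) with respect to Lebesgue measure, where f₁ and g₁ are the marginal densities on ℝ^m, f₂(s, ·) and g₂(s, ·) are conditional densities (i.e., ∫_{ℝ^n} f₂(s, t) dt = 1 and ∫_{ℝ^n} g₂(s, t) dt = 1 for almost every s), and f₁(s) > 0 for almost every s. Then TV(X, Y) = ∫_{ℝ^m} f₁(s) · TV_{g₁(s)/f₁(s)}( f₂(s, ·), g₂(s, ·) ) ds, i.e., the total variation between the joint distributions equals the average over s ∼ f₁ of the TV_{a(s)} divergence between the conditional distributions, with a(s) = g₁(s)/f₁(s). -/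
open MeasureTheory

/-- `TV(X, Y) = TV_1(X, Y)`. -/
noncomputable def TV {E : Type*} [MeasureSpace E] (f g : E → ℝ) : ℝ :=
  TVa 1 f g

/-- A nonnegative measurable function with product structure `f₁(s)·f₂(s,t)` where
`f₁` and the conditionals integrate to one is integrable on the product space. -/
lemma integrable_density_prod {m n : ℕ}
    (f₁ : EuclideanSpace ℝ (Fin m) → ℝ)
    (f₂ : EuclideanSpace ℝ (Fin m) → EuclideanSpace ℝ (Fin n) → ℝ)
    (hf₁m : Measurable f₁)
    (hf₂m : Measurable (Function.uncurry f₂))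
    (hf₁0 : ∀ s, 0 ≤ f₁ s)
    (hf₂0 : ∀ s t, 0 ≤ f₂ s t)
    (hf₁1 : ∫ s, f₁ s = 1)
    (hf₂1 : ∀ᵐ s ∂(volume : Measure (EuclideanSpace ℝ (Fin m))), ∫ t, f₂ s t = 1) :
    Integrable (fun p : EuclideanSpace ℝ (Fin m) × EuclideanSpace ℝ (Fin n) =>
      f₁ p.1 * f₂ p.1 p.2)
      ((volume : Measure (EuclideanSpace ℝ (Fin m))).prod
        (volume : Measure (EuclideanSpace ℝ (Fin n)))) := by
  have hFm : Measurable (fun p : EuclideanSpace ℝ (Fin m) × EuclideanSpace ℝ (Fin n) =>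
      f₁ p.1 * f₂ p.1 p.2) := (hf₁m.comp measurable_fst).mul hf₂m
  have hf₁i : Integrable f₁ := by
    by_contra h
    rw [integral_undef h] at hf₁1
    norm_num at hf₁1
  have hf₂i : ∀ᵐ s ∂(volume : Measure (EuclideanSpace ℝ (Fin m))), Integrable (f₂ s) := by
    filter_upwards [hf₂1] with s hs
    by_contra h
    rw [integral_undef h] at hs
    norm_num at hs
  have lF : ∫⁻ p : EuclideanSpace ℝ (Fin m) × EuclideanSpace ℝ (Fin n),
      ENNReal.ofReal (f₁ p.1 * f₂ p.1 p.2)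
      ∂((volume : Measure (EuclideanSpace ℝ (Fin m))).prod
        (volume : Measure (EuclideanSpace ℝ (Fin n)))) = 1 := by
    rw [lintegral_prod (fun p => ENNReal.ofReal (f₁ p.1 * f₂ p.1 p.2))
      hFm.ennreal_ofReal.aemeasurable]
    have hcongr : ∀ᵐ s ∂(volume : Measure (EuclideanSpace ℝ (Fin m))),
        ∫⁻ t, ENNReal.ofReal (f₁ s * f₂ s t) = ENNReal.ofReal (f₁ s) := by
      filter_upwards [hf₂1, hf₂i] with s h1 h2
      calc ∫⁻ t, ENNReal.ofReal (f₁ s * f₂ s t)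
          = ∫⁻ t, ENNReal.ofReal (f₁ s) * ENNReal.ofReal (f₂ s t) := by
            simp_rw [ENNReal.ofReal_mul (hf₁0 s)]
        _ = ENNReal.ofReal (f₁ s) * ∫⁻ t, ENNReal.ofReal (f₂ s t) :=
            lintegral_const_mul _
              (ENNReal.measurable_ofReal.comp (hf₂m.comp (measurable_prodMk_left)))
        _ = ENNReal.ofReal (f₁ s) * ENNReal.ofReal (∫ t, f₂ s t) := by
            rw [ofReal_integral_eq_lintegral_ofReal h2
              (Filter.Eventually.of_forall (hf₂0 s))]
        _ = ENNReal.ofReal (f₁ s) := by rw [h1]; simp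
    rw [lintegral_congr_ae hcongr,
      ← ofReal_integral_eq_lintegral_ofReal hf₁i (Filter.Eventually.of_forall hf₁0),
      hf₁1, ENNReal.ofReal_one]
  refine ⟨hFm.aestronglyMeasurable, ?_⟩
  have hnn : 0 ≤ᵐ[(volume : Measure (EuclideanSpace ℝ (Fin m))).prod
      (volume : Measure (EuclideanSpace ℝ (Fin n)))]
      (fun p : EuclideanSpace ℝ (Fin m) × EuclideanSpace ℝ (Fin n) => f₁ p.1 * f₂ p.1 p.2) :=
    Filter.Eventually.of_forall fun p => mul_nonneg (hf₁0 p.1) (hf₂0 p.1 p.2)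
  exact (hasFiniteIntegral_iff_ofReal hnn).mpr (lF ▸ ENNReal.one_lt_top)

/-- Chain-rule decomposition of total variation: for joint densities
`f(s, t) = f₁(s)·f₂(s, t)` and `g(s, t) = g₁(s)·g₂(s, t)` with `f₁ > 0` a.e., the total
variation of the joints equals the average over `s ∼ f₁` of `TV_{g₁(s)/f₁(s)}` between the
conditionals. -/
theorem tv_chain_rule (m n : ℕ)
    (f₁ g₁ : EuclideanSpace ℝ (Fin m) → ℝ)
    (f₂ g₂ : EuclideanSpace ℝ (Fin m) → EuclideanSpace ℝ (Fin n) → ℝ)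
    (hf₁m : Measurable f₁) (hg₁m : Measurable g₁)
    (hf₂m : Measurable (Function.uncurry f₂)) (hg₂m : Measurable (Function.uncurry g₂))
    (hf₁0 : ∀ s, 0 ≤ f₁ s) (hg₁0 : ∀ s, 0 ≤ g₁ s)
    (hf₂0 : ∀ s t, 0 ≤ f₂ s t) (hg₂0 : ∀ s t, 0 ≤ g₂ s t)
    (hf₁1 : ∫ s, f₁ s = 1) (hg₁1 : ∫ s, g₁ s = 1)
    (hf₂1 : ∀ᵐ s ∂(volume : Measure (EuclideanSpace ℝ (Fin m))), ∫ t, f₂ s t = 1)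
    (hg₂1 : ∀ᵐ s ∂(volume : Measure (EuclideanSpace ℝ (Fin m))), ∫ t, g₂ s t = 1)
    (hf₁pos : ∀ᵐ s ∂(volume : Measure (EuclideanSpace ℝ (Fin m))), 0 < f₁ s) :
    TV (fun p : EuclideanSpace ℝ (Fin m) × EuclideanSpace ℝ (Fin n) => f₁ p.1 * f₂ p.1 p.2)
        (fun p : EuclideanSpace ℝ (Fin m) × EuclideanSpace ℝ (Fin n) => g₁ p.1 * g₂ p.1 p.2)
      = ∫ s, f₁ s * TVa (g₁ s / f₁ s) (f₂ s) (g₂ s) := by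
  have hFi := integrable_density_prod f₁ f₂ hf₁m hf₂m hf₁0 hf₂0 hf₁1 hf₂1
  have hGi := integrable_density_prod g₁ g₂ hg₁m hg₂m hg₁0 hg₂0 hg₁1 hg₂1
  have hDi : Integrable (fun p : EuclideanSpace ℝ (Fin m) × EuclideanSpace ℝ (Fin n) =>
      |f₁ p.1 * f₂ p.1 p.2 - g₁ p.1 * g₂ p.1 p.2|)
      ((volume : Measure (EuclideanSpace ℝ (Fin m))).prod
        (volume : Measure (EuclideanSpace ℝ (Fin n)))) := by
    have := (hFi.sub hGi).abs
    simpa [Pi.sub_apply] using this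
  have key : ∫ p : EuclideanSpace ℝ (Fin m) × EuclideanSpace ℝ (Fin n),
      |f₁ p.1 * f₂ p.1 p.2 - g₁ p.1 * g₂ p.1 p.2|
      = ∫ s, ∫ t, |f₁ s * f₂ s t - g₁ s * g₂ s t| := by
    rw [Measure.volume_eq_prod, integral_prod _ hDi]
  have hRHS : ∫ s, f₁ s * ((1 / 2 : ℝ) * ∫ t, |f₂ s t - g₁ s / f₁ s * g₂ s t|)
      = ∫ s, (1 / 2 : ℝ) * ∫ t, |f₁ s * f₂ s t - g₁ s * g₂ s t| := by
    refine integral_congr_ae ?_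
    filter_upwards [hf₁pos] with s hs
    rw [← mul_assoc, mul_comm (f₁ s) (1 / 2 : ℝ), mul_assoc, ← integral_const_mul]
    congr 1
    refine integral_congr_ae (Filter.Eventually.of_forall fun t => ?_)
    show f₁ s * |f₂ s t - g₁ s / f₁ s * g₂ s t| = |f₁ s * f₂ s t - g₁ s * g₂ s t|
    rw [show f₁ s * f₂ s t - g₁ s * g₂ s t
        = f₁ s * (f₂ s t - g₁ s / f₁ s * g₂ s t) by field_simp,
      abs_mul, abs_of_pos hs]
  simp only [TV, TVa, one_mul]
  rw [hRHS, integral_const_mul, key]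
end

section
/- (Upper bound on membership-inference attack accuracy.) Let ε ≥ 0 and let p, q > 0 be real numbers satisfying |log(p/q)| ≤ ε. Then max( p/(p + q), q/(p + q) ) ≤ σ(ε), where σ(u) = 1/(1 + e^{−u}) is the sigmoid function. In particular, the accuracy of the Bayes-optimal membership classifier, max(ℙ(D | θ), 1 − ℙ(D | θ)) under a uniform prior over the two neighboring datasets, is at most σ(ε). -/
/-- The sigmoid function `σ(u) = 1/(1 + e^{−u})`. -/
noncomputable def sigmoid (u : ℝ) : ℝ := 1 / (1 + Real.exp (-u))

lemma aux_bound (ε a b : ℝ) (ha : 0 < a) (hb : 0 < b)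
    (hab : a ≤ b * Real.exp ε) : a / (a + b) ≤ sigmoid ε := by
  have hE : 0 < Real.exp (-ε) := Real.exp_pos _
  have hden : 0 < a + b := by linarith
  have hden2 : 0 < 1 + Real.exp (-ε) := by linarith
  rw [sigmoid, div_le_div_iff₀ hden hden2]
  have : a * Real.exp (-ε) ≤ b := by
    have := mul_le_mul_of_nonneg_right hab hE.le
    rwa [mul_assoc, ← Real.exp_add, add_neg_cancel, Real.exp_zero, mul_one] at this
  nlinarith

/-- Upper bound on membership-inference attack accuracy: if `|log(p/q)| ≤ ε` then the
accuracy of the Bayes-optimal classifier, `max(p/(p+q), q/(p+q))`, is at most `σ(ε)`. -/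
theorem accuracy_bound (ε p q : ℝ) (hε : 0 ≤ ε) (hp : 0 < p) (hq : 0 < q)
    (h : |Real.log (p / q)| ≤ ε) :
    max (p / (p + q)) (q / (p + q)) ≤ sigmoid ε := by
  rw [abs_le] at h
  have h1 : p / q ≤ Real.exp ε :=
    (Real.log_le_iff_le_exp (div_pos hp hq)).mp h.2
  have h2 : q / p ≤ Real.exp ε := by
    rw [Real.log_div hp.ne' hq.ne'] at h
    have : Real.log (q / p) ≤ ε := by
      rw [Real.log_div hq.ne' hp.ne']; linarith [h.1]
    exact (Real.log_le_iff_le_exp (div_pos hq hp)).mp this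
  have hp' : p ≤ q * Real.exp ε := by
    rw [div_le_iff₀ hq] at h1; linarith
  have hq' : q ≤ p * Real.exp ε := by
    rw [div_le_iff₀ hp] at h2; linarith
  refine max_le (aux_bound ε p q hp hq hp') ?_
  have := aux_bound ε q p hq hp hq'
  rwa [add_comm q p] at this
end
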